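/- In an implicative aBE algebra, for all x, y, z, t: ((y → x) → z) → t = ((y → x) → z) → ((x → z) → t). -/
import Mathlib


class ImplicativeABE (X : Type*) where
  imp : X → X → X
  one : X
  one_imp : ∀ x, imp one x = x
  imp_one : ∀ x, imp x one = one
  imp_self : ∀ x, imp x x = one
  exch : ∀ x y z, imp x (imp y z) = imp y (imp x z)
  antisymm : ∀ x y, imp x y = one → imp y x = one → x = y
  implicative : ∀ x y, imp (imp x y) x = x

infixr:60 " ⮕ " => ImplicativeABE.imp
notation "𝟙" => ImplicativeABE.one

section AuxLemmas

variable {X : Type*} [ImplicativeABE X]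

private lemma aux_l15 (a b c : X) : (a ⮕ (b ⮕ c)) ⮕ b = b := by
  rw [ImplicativeABE.exch a b c]
  exact ImplicativeABE.implicative b (a ⮕ c)

private lemma aux_l49 (a b c : X) : a ⮕ ((b ⮕ c) ⮕ b) = a ⮕ b := by
  rw [ImplicativeABE.implicative b c]

private lemma aux_l50 (a b c : X) : a ⮕ ((b ⮕ a) ⮕ c) = a ⮕ c := by
  rw [ImplicativeABE.exch a (b ⮕ a) c]
  conv_lhs => rw [← aux_l49 b a c]
  exact aux_l15 b (a ⮕ c) a

private lemma aux_l55 (a b c : X) : (a ⮕ b) ⮕ (c ⮕ a) = c ⮕ a := by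
  conv_lhs => rw [← aux_l50 a c b]
  exact aux_l15 a (c ⮕ a) b

private lemma aux_l56 (a b c : X) : (a ⮕ b) ⮕ (b ⮕ c) = b ⮕ c := by
  conv_lhs => rw [← aux_l55 b c a]
  exact ImplicativeABE.implicative (b ⮕ c) (a ⮕ b)

end AuxLemmas

theorem stmt3 {X : Type*} [ImplicativeABE X] (x y z t : X) :
    ((y ⮕ x) ⮕ z) ⮕ t = ((y ⮕ x) ⮕ z) ⮕ ((x ⮕ z) ⮕ t) := by
  rw [ImplicativeABE.exch ((y ⮕ x) ⮕ z) (x ⮕ z) t, ← aux_l50 x y z]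
  exact (aux_l56 x ((y ⮕ x) ⮕ z) t).symm
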